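/- Let δ ∈ (0, 1/2) and C₀ > 0. Let χ₀ : ℝ → ℝ be twice continuously differentiable, compactly supported, and equal to 1 on a neighborhood of 0; let ρ : ℝ → ℝ be twice continuously differentiable and bounded together with its first two derivatives, with ρ equal to 0 on a neighborhood of 0 and equal to 1 outside a compact set; let f : ℝ → ℝ be twice continuously differentiable with |f(x)| ≤ C₀(1 + |x|)^(−δ), |f'(x)| ≤ C₀(1 + |x|)^(−1−δ) and |f''(x)| ≤ C₀(1 + |x|)^(−2−δ) for all x ∈ ℝ. Then there is a constant C > 0 such that for every h ∈ (0, 1] and every ℓ ≥ 1: ∫_ℝ | d²/dx² ( χ₀(h·x)·ρ(x/ℓ)·f(x) ) | dx ≤ C·( h^δ + ℓ^(−δ) ). -/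

import Mathlib

set_option maxHeartbeats 1600000

open MeasureTheory

lemma cd1_of_cd2 {g : ℝ → ℝ} (hg : ContDiff ℝ 2 g) : ContDiff ℝ 1 (deriv g) := by
  have : ContDiff ℝ ((1:ℕ) + 1) g := by norm_num [hg]
  exact (contDiff_succ_iff_deriv.mp this).2.2

lemma cont_d2 {g : ℝ → ℝ} (hg : ContDiff ℝ 2 g) : Continuous (deriv (deriv g)) := by
  have h1 : ContDiff ℝ 1 (deriv g) := cd1_of_cd2 hg
  have : ContDiff ℝ ((0:ℕ) + 1) (deriv g) := by norm_num [h1]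
  exact ((contDiff_succ_iff_deriv.mp this).2.2).continuous

lemma deriv_zero_of_nmem {g : ℝ → ℝ} {y : ℝ} (hy : y ∉ tsupport g) : deriv g y = 0 := by
  by_contra hne
  exact hy (support_deriv_subset (Function.mem_support.mpr hne))

lemma deriv2_zero_of_nmem {g : ℝ → ℝ} {y : ℝ} (hy : y ∉ tsupport g) :
    deriv (deriv g) y = 0 :=
  deriv_zero_of_nmem fun hmem =>
    hy (closure_minimal support_deriv_subset (isClosed_tsupport _) hmem)

lemma deriv_zero_of_locally_const {g : ℝ → ℝ} {S : Set ℝ} (hS : IsOpen S) {c : ℝ}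
    (hg : ∀ y ∈ S, g y = c) : ∀ y ∈ S, deriv g y = 0 := by
  intro y hy
  have he : g =ᶠ[nhds y] fun _ => c := Filter.eventuallyEq_of_mem (hS.mem_nhds hy) hg
  rw [he.deriv_eq]
  simp

lemma deriv2_zero_of_locally_const {g : ℝ → ℝ} {S : Set ℝ} (hS : IsOpen S) {c : ℝ}
    (hg : ∀ y ∈ S, g y = c) : ∀ y ∈ S, deriv (deriv g) y = 0 :=
  deriv_zero_of_locally_const hS (deriv_zero_of_locally_const hS hg)

lemma abs_add₆ (a b c d e g : ℝ) : |a+b+c+d+e+g| ≤ |a|+|b|+|c|+|d|+|e|+|g| := by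
  have h1 := abs_add_le (a+b+c+d+e) g
  have h2 := abs_add_le (a+b+c+d) e
  have h3 := abs_add_le (a+b+c) d
  have h4 := abs_add_le (a+b) c
  have h5 := abs_add_le a b
  linarith

lemma second_deriv_formula (χ₀ ρ f : ℝ → ℝ) (hχ : ContDiff ℝ 2 χ₀) (hρ : ContDiff ℝ 2 ρ)
    (hf : ContDiff ℝ 2 f) (h ℓ x : ℝ) :
    deriv (deriv (fun x => χ₀ (h * x) * ρ (x / ℓ) * f x)) x =
      (h * (h * deriv (deriv χ₀) (h*x))) * ρ (x/ℓ) * f x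
      + 2 * ((h * deriv χ₀ (h*x)) * (deriv ρ (x/ℓ) * (1/ℓ)) * f x)
      + 2 * ((h * deriv χ₀ (h*x)) * ρ (x/ℓ) * deriv f x)
      + χ₀ (h*x) * (deriv (deriv ρ) (x/ℓ) * (1/ℓ) * (1/ℓ)) * f x
      + 2 * (χ₀ (h*x) * (deriv ρ (x/ℓ) * (1/ℓ)) * deriv f x)
      + χ₀ (h*x) * ρ (x/ℓ) * deriv (deriv f) x := by
  have hχd : Differentiable ℝ χ₀ := hχ.differentiable (by norm_num)
  have hρd : Differentiable ℝ ρ := hρ.differentiable (by norm_num)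
  have hfd : Differentiable ℝ f := hf.differentiable (by norm_num)
  have hχ1d : Differentiable ℝ (deriv χ₀) := (cd1_of_cd2 hχ).differentiable (by norm_num)
  have hρ1d : Differentiable ℝ (deriv ρ) := (cd1_of_cd2 hρ).differentiable (by norm_num)
  have hf1d : Differentiable ℝ (deriv f) := (cd1_of_cd2 hf).differentiable (by norm_num)
  have hlin : ∀ y : ℝ, HasDerivAt (fun z : ℝ => h * z) h y := fun y => by
    simpa using (hasDerivAt_id y).const_mul h
  have HU : ∀ y : ℝ, HasDerivAt (fun z => χ₀ (h*z)) (deriv χ₀ (h*y) * h) y := fun y =>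
    (hχd (h*y)).hasDerivAt.comp y (hlin y)
  have HV : ∀ y : ℝ, HasDerivAt (fun z => ρ (z/ℓ)) (deriv ρ (y/ℓ) * (1/ℓ)) y := fun y => by
    have := (hρd (y/ℓ)).hasDerivAt.comp y ((hasDerivAt_id y).div_const ℓ)
    simpa [Function.comp_def] using this
  set G : ℝ → ℝ := fun y =>
    (deriv χ₀ (h*y) * h * ρ (y/ℓ) + χ₀ (h*y) * (deriv ρ (y/ℓ) * (1/ℓ))) * f y
    + χ₀ (h*y) * ρ (y/ℓ) * deriv f y with hGdef
  have hFG : deriv (fun x => χ₀ (h * x) * ρ (x / ℓ) * f x) = G := by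
    funext y
    exact (((HU y).mul (HV y)).mul (hfd y).hasDerivAt).deriv
  rw [hFG]
  have HU1 : HasDerivAt (fun z => deriv χ₀ (h*z) * h) (deriv (deriv χ₀) (h*x) * h * h) x :=
    ((hχ1d (h*x)).hasDerivAt.comp x (hlin x)).mul_const h
  have HV1 : HasDerivAt (fun z => deriv ρ (z/ℓ) * (1/ℓ))
      (deriv (deriv ρ) (x/ℓ) * (1/ℓ) * (1/ℓ)) x := by
    have := ((hρ1d (x/ℓ)).hasDerivAt.comp x ((hasDerivAt_id x).div_const ℓ)).mul_const (1/ℓ)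
    simpa using this
  have HG : HasDerivAt G
      (((deriv (deriv χ₀) (h*x) * h * h * ρ (x/ℓ) + deriv χ₀ (h*x) * h * (deriv ρ (x/ℓ) * (1/ℓ))
          + (deriv χ₀ (h*x) * h * (deriv ρ (x/ℓ) * (1/ℓ)) + χ₀ (h*x) * (deriv (deriv ρ) (x/ℓ) * (1/ℓ) * (1/ℓ)))) * f x
        + (deriv χ₀ (h*x) * h * ρ (x/ℓ) + χ₀ (h*x) * (deriv ρ (x/ℓ) * (1/ℓ))) * deriv f x)
        + ((deriv χ₀ (h*x) * h * ρ (x/ℓ) + χ₀ (h*x) * (deriv ρ (x/ℓ) * (1/ℓ))) * deriv f x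
          + χ₀ (h*x) * ρ (x/ℓ) * deriv (deriv f) x)) x :=
    ((((HU1.mul (HV x)).add ((HU x).mul HV1)).mul (hfd x).hasDerivAt).add
      (((HU x).mul (HV x)).mul (hf1d x).hasDerivAt))
  rw [HG.deriv]
  ring

/-- L¹ second-derivative estimate for the family `x ↦ χ₀(hx)·ρ(x/ℓ)·f(x)`:
for `χ₀` a `C²` compactly supported cut-off equal to `1` near `0`, `ρ` a `C²` function
bounded with its first two derivatives, vanishing near `0` and equal to `1` outside a
compact set, and `f ∈ S^{−δ}` (with two derivatives), one has
`∫ℝ |d²/dx² (χ₀(hx)·ρ(x/ℓ)·f(x))| dx ≤ C·(h^δ + ℓ^(−δ))` uniformly in `h ∈ (0, 1]`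
and `ℓ ≥ 1`. -/
theorem cutoff_family_second_derivative_L1 (δ C₀ : ℝ)
    (hδ : δ ∈ Set.Ioo (0 : ℝ) (1 / 2)) (hC₀ : 0 < C₀)
    (χ₀ : ℝ → ℝ) (hχ₀ : ContDiff ℝ 2 χ₀) (hχ₀supp : HasCompactSupport χ₀)
    (hχ₀one : ∃ ε : ℝ, 0 < ε ∧ ∀ x : ℝ, |x| < ε → χ₀ x = 1)
    (ρ : ℝ → ℝ) (hρ : ContDiff ℝ 2 ρ)
    (hρbdd : ∃ B : ℝ, ∀ x : ℝ, |ρ x| ≤ B ∧ |deriv ρ x| ≤ B ∧ |deriv (deriv ρ) x| ≤ B)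
    (hρzero : ∃ ε : ℝ, 0 < ε ∧ ∀ x : ℝ, |x| < ε → ρ x = 0)
    (hρone : ∃ R : ℝ, ∀ x : ℝ, R ≤ |x| → ρ x = 1)
    (f : ℝ → ℝ) (hf : ContDiff ℝ 2 f)
    (hfb : ∀ x : ℝ, |f x| ≤ C₀ * (1 + |x|) ^ (-δ))
    (hf'b : ∀ x : ℝ, |deriv f x| ≤ C₀ * (1 + |x|) ^ (-1 - δ))
    (hf''b : ∀ x : ℝ, |deriv (deriv f) x| ≤ C₀ * (1 + |x|) ^ (-2 - δ)) :
    ∃ C : ℝ, 0 < C ∧ ∀ h ∈ Set.Ioc (0 : ℝ) 1, ∀ ℓ : ℝ, 1 ≤ ℓ →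
      (∫ x : ℝ, |deriv (deriv (fun x => χ₀ (h * x) * ρ (x / ℓ) * f x)) x|)
        ≤ C * (h ^ δ + ℓ ^ (-δ)) := by
  obtain ⟨hδ0, hδhalf⟩ := hδ
  obtain ⟨ε₁, hε₁, hχone⟩ := hχ₀one
  obtain ⟨ε₂, hε₂, hρz⟩ := hρzero
  obtain ⟨R₀, hR₀one⟩ := hρone
  obtain ⟨B₀, hB₀⟩ := hρbdd
  -- bounds on χ₀ and its derivatives
  obtain ⟨A₀, hA₀⟩ := hχ₀supp.exists_bound_of_continuous hχ₀.continuous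
  obtain ⟨A₁, hA₁⟩ := (hχ₀supp.deriv).exists_bound_of_continuous (cd1_of_cd2 hχ₀).continuous
  obtain ⟨A₂, hA₂⟩ := (hχ₀supp.deriv.deriv).exists_bound_of_continuous (cont_d2 hχ₀)
  set D : ℝ := 1 + |A₀| + |A₁| + |A₂| + |B₀| with hDdef
  have hD0 : 0 < D := by rw [hDdef]; positivity
  have hD1 : 1 ≤ D := by
    rw [hDdef]
    have := abs_nonneg A₀; have := abs_nonneg A₁; have := abs_nonneg A₂; have := abs_nonneg B₀
    linarith
  have hDχ : ∀ y : ℝ, |χ₀ y| ≤ D := fun y => by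
    have := hA₀ y; rw [Real.norm_eq_abs] at this
    have := le_abs_self A₀
    have := abs_nonneg A₁; have := abs_nonneg A₂; have := abs_nonneg B₀
    rw [hDdef]; linarith
  have hDχ1 : ∀ y : ℝ, |deriv χ₀ y| ≤ D := fun y => by
    have := hA₁ y; rw [Real.norm_eq_abs] at this
    have := le_abs_self A₁
    have := abs_nonneg A₀; have := abs_nonneg A₂; have := abs_nonneg B₀
    rw [hDdef]; linarith
  have hDχ2 : ∀ y : ℝ, |deriv (deriv χ₀) y| ≤ D := fun y => by
    have := hA₂ y; rw [Real.norm_eq_abs] at this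
    have := le_abs_self A₂
    have := abs_nonneg A₀; have := abs_nonneg A₁; have := abs_nonneg B₀
    rw [hDdef]; linarith
  have hDρ : ∀ y : ℝ, |ρ y| ≤ D := fun y => by
    have := (hB₀ y).1
    have := le_abs_self B₀
    have := abs_nonneg A₀; have := abs_nonneg A₁; have := abs_nonneg A₂
    rw [hDdef]; linarith
  have hDρ1 : ∀ y : ℝ, |deriv ρ y| ≤ D := fun y => by
    have := (hB₀ y).2.1
    have := le_abs_self B₀
    have := abs_nonneg A₀; have := abs_nonneg A₁; have := abs_nonneg A₂
    rw [hDdef]; linarith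
  have hDρ2 : ∀ y : ℝ, |deriv (deriv ρ) y| ≤ D := fun y => by
    have := (hB₀ y).2.2
    have := le_abs_self B₀
    have := abs_nonneg A₀; have := abs_nonneg A₁; have := abs_nonneg A₂
    rw [hDdef]; linarith
  -- support radius of χ₀
  obtain ⟨M₀, hM₀⟩ := (hχ₀supp.isBounded).subset_closedBall 0
  set M : ℝ := max M₀ 1 with hMdef
  have hM1 : (1:ℝ) ≤ M := le_max_right _ _
  have hM0 : 0 < M := lt_of_lt_of_le one_pos hM1
  set R : ℝ := max R₀ 1 with hRdef
  have hR1 : (1:ℝ) ≤ R := le_max_right _ _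
  have hR0 : 0 < R := lt_of_lt_of_le one_pos hR1
  -- vanishing of derivatives of χ₀ near 0 and far away
  have hopen1 : IsOpen {y : ℝ | |y| < ε₁} := isOpen_lt continuous_abs continuous_const
  have hc1z : ∀ y : ℝ, |y| < ε₁ → deriv χ₀ y = 0 := fun y hy =>
    deriv_zero_of_locally_const hopen1 (fun z hz => hχone z hz) y hy
  have hc2z : ∀ y : ℝ, |y| < ε₁ → deriv (deriv χ₀) y = 0 := fun y hy =>
    deriv2_zero_of_locally_const hopen1 (fun z hz => hχone z hz) y hy
  have hnotsupp : ∀ y : ℝ, M < |y| → y ∉ tsupport χ₀ := by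
    intro y hy hmem
    have := hM₀ hmem
    rw [Metric.mem_closedBall, Real.dist_eq, sub_zero] at this
    have : |y| ≤ M := le_trans this (le_max_left _ _)
    linarith
  have hc1M : ∀ y : ℝ, M < |y| → deriv χ₀ y = 0 := fun y hy =>
    deriv_zero_of_nmem (hnotsupp y hy)
  have hc2M : ∀ y : ℝ, M < |y| → deriv (deriv χ₀) y = 0 := fun y hy =>
    deriv2_zero_of_nmem (hnotsupp y hy)
  -- vanishing of ρ and derivatives near 0, and of derivatives far away
  have hopen2 : IsOpen {y : ℝ | |y| < ε₂} := isOpen_lt continuous_abs continuous_const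
  have hr1z : ∀ y : ℝ, |y| < ε₂ → deriv ρ y = 0 := fun y hy =>
    deriv_zero_of_locally_const hopen2 (fun z hz => hρz z hz) y hy
  have hr2z : ∀ y : ℝ, |y| < ε₂ → deriv (deriv ρ) y = 0 := fun y hy =>
    deriv2_zero_of_locally_const hopen2 (fun z hz => hρz z hz) y hy
  have hopen3 : IsOpen {y : ℝ | R₀ < |y|} := isOpen_lt continuous_const continuous_abs
  have hr1R : ∀ y : ℝ, R < |y| → deriv ρ y = 0 := fun y hy =>
    deriv_zero_of_locally_const hopen3 (fun z hz => hR₀one z (le_of_lt hz)) y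
      (lt_of_le_of_lt (le_max_left _ _) hy)
  have hr2R : ∀ y : ℝ, R < |y| → deriv (deriv ρ) y = 0 := fun y hy =>
    deriv2_zero_of_locally_const hopen3 (fun z hz => hR₀one z (le_of_lt hz)) y
      (lt_of_le_of_lt (le_max_left _ _) hy)
  -- the constant
  refine ⟨10*C₀*D^2*M*ε₁^(-δ) + (6*R + Real.pi)*C₀*D^2*ε₂^(-δ) + 1, by positivity, ?_⟩
  intro h hh ℓ hℓ
  obtain ⟨hh0, hh1⟩ := hh
  have hℓ0 : (0:ℝ) < ℓ := lt_of_lt_of_le one_pos hℓ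
  have hinvℓ : 1/ℓ ≤ 1 := by rw [div_le_one hℓ0]; exact hℓ
  have hinvℓ0 : (0:ℝ) < 1/ℓ := by positivity
  have hhδ : (0:ℝ) < h^δ := Real.rpow_pos_of_pos hh0 δ
  have hℓδ : (0:ℝ) < ℓ^(-δ) := Real.rpow_pos_of_pos hℓ0 _
  have hε₁δ : (0:ℝ) < ε₁^(-δ) := Real.rpow_pos_of_pos hε₁ _
  have hε₂δ : (0:ℝ) < ε₂^(-δ) := Real.rpow_pos_of_pos hε₂ _
  -- decay transfer estimates
  have hEE1 : ∀ x : ℝ, ε₁ ≤ h*|x| → (1+|x|)^(-δ) ≤ ε₁^(-δ)*h^δ := by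
    intro x hx
    have hP0 : (0:ℝ) < 1 + |x| := by positivity
    have h1 : ε₁/h ≤ 1+|x| := by
      rw [div_le_iff₀ hh0]
      calc ε₁ ≤ h*|x| := hx
        _ ≤ (1+|x|)*h := by nlinarith [abs_nonneg x]
    have h2 : (1+|x|)^(-δ) ≤ (ε₁/h)^(-δ) :=
      Real.rpow_le_rpow_of_nonpos (by positivity) h1 (by linarith)
    calc (1+|x|)^(-δ) ≤ (ε₁/h)^(-δ) := h2
      _ = ε₁^(-δ)/h^(-δ) := Real.div_rpow hε₁.le hh0.le _
      _ = ε₁^(-δ)*h^δ := by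
          rw [Real.rpow_neg hh0.le]
          field_simp
  have hEE2 : ∀ x : ℝ, ε₂*ℓ ≤ |x| → (1+|x|)^(-δ) ≤ ε₂^(-δ)*ℓ^(-δ) := by
    intro x hx
    have h1 : ε₂*ℓ ≤ 1+|x| := by nlinarith [abs_nonneg x]
    have h2 : (1+|x|)^(-δ) ≤ (ε₂*ℓ)^(-δ) :=
      Real.rpow_le_rpow_of_nonpos (by positivity) h1 (by linarith)
    calc (1+|x|)^(-δ) ≤ (ε₂*ℓ)^(-δ) := h2
      _ = ε₂^(-δ)*ℓ^(-δ) := Real.mul_rpow hε₂.le hℓ0.le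
  -- pointwise claims
  have claim1 : ∀ x : ℝ,
      |(h * (h * deriv (deriv χ₀) (h*x))) * ρ (x/ℓ) * f x|
      + |2 * ((h * deriv χ₀ (h*x)) * (deriv ρ (x/ℓ) * (1/ℓ)) * f x)|
      + |2 * ((h * deriv χ₀ (h*x)) * ρ (x/ℓ) * deriv f x)|
      ≤ Set.indicator (Set.Icc (-(M/h)) (M/h))
          (fun _ => 5*C₀*D^2*(h*(ε₁^(-δ)*h^δ))) x := by
    intro x
    have hP1 : (1:ℝ) ≤ 1 + |x| := by have := abs_nonneg x; linarith
    by_cases hx : |x| ≤ M/h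
    · rw [Set.indicator_of_mem (Set.mem_Icc.mpr (abs_le.mp hx))]
      by_cases hx2 : |h*x| < ε₁
      · rw [hc1z _ hx2, hc2z _ hx2]
        simp only [mul_zero, zero_mul, abs_zero, add_zero, zero_add]
        positivity
      · push_neg at hx2
        have hxx : ε₁ ≤ h*|x| := by rwa [abs_mul, abs_of_pos hh0] at hx2
        have hE := hEE1 x hxx
        have hfx : |f x| ≤ C₀*(ε₁^(-δ)*h^δ) :=
          (hfb x).trans (mul_le_mul_of_nonneg_left hE hC₀.le)
        have hf'x : |deriv f x| ≤ C₀*(ε₁^(-δ)*h^δ) := by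
          refine (hf'b x).trans (le_trans ?_ (mul_le_mul_of_nonneg_left hE hC₀.le))
          exact mul_le_mul_of_nonneg_left
            (Real.rpow_le_rpow_of_exponent_le hP1 (by linarith)) hC₀.le
        have t1 : |(h * (h * deriv (deriv χ₀) (h*x))) * ρ (x/ℓ) * f x|
            ≤ h*(1*D)*D*(C₀*(ε₁^(-δ)*h^δ)) := by
          simp only [abs_mul, abs_of_pos hh0]
          gcongr <;> first
            | assumption
            | exact hDχ _
            | exact hDχ1 _
            | exact hDχ2 _
            | exact hDρ _
            | exact hDρ1 _
            | exact hDρ2 _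
            | exact hfx
            | exact hf'x
            | exact hf''b x
        have t2 : |2 * ((h * deriv χ₀ (h*x)) * (deriv ρ (x/ℓ) * (1/ℓ)) * f x)|
            ≤ 2*((h*D)*(D*1)*(C₀*(ε₁^(-δ)*h^δ))) := by
          simp only [abs_mul, abs_of_pos hh0, abs_of_pos hinvℓ0, abs_two]
          gcongr <;> first
            | assumption
            | exact hDχ _
            | exact hDχ1 _
            | exact hDχ2 _
            | exact hDρ _
            | exact hDρ1 _
            | exact hDρ2 _
            | exact hfx
            | exact hf'x
            | exact hf''b x
        have t3 : |2 * ((h * deriv χ₀ (h*x)) * ρ (x/ℓ) * deriv f x)|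
            ≤ 2*((h*D)*D*(C₀*(ε₁^(-δ)*h^δ))) := by
          simp only [abs_mul, abs_of_pos hh0, abs_two]
          gcongr <;> first
            | assumption
            | exact hDχ _
            | exact hDχ1 _
            | exact hDχ2 _
            | exact hDρ _
            | exact hDρ1 _
            | exact hDρ2 _
            | exact hfx
            | exact hf'x
            | exact hf''b x
        nlinarith [t1, t2, t3]
    · push_neg at hx
      have hMlt : M < |h*x| := by
        rw [abs_mul, abs_of_pos hh0]
        calc M = h*(M/h) := by field_simp
          _ < h*|x| := by exact mul_lt_mul_of_pos_left hx hh0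
      rw [hc1M _ hMlt, hc2M _ hMlt]
      simp only [mul_zero, zero_mul, abs_zero, add_zero, zero_add]
      exact Set.indicator_nonneg (fun _ _ => by positivity) x
  have claim2 : ∀ x : ℝ,
      |χ₀ (h*x) * (deriv (deriv ρ) (x/ℓ) * (1/ℓ) * (1/ℓ)) * f x|
      + |2 * (χ₀ (h*x) * (deriv ρ (x/ℓ) * (1/ℓ)) * deriv f x)|
      ≤ Set.indicator (Set.Icc (-(R*ℓ)) (R*ℓ))
          (fun _ => 3*C₀*D^2*((1/ℓ)*(ε₂^(-δ)*ℓ^(-δ)))) x := by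
    intro x
    have hP1 : (1:ℝ) ≤ 1 + |x| := by have := abs_nonneg x; linarith
    have habsdiv : |x/ℓ| = |x|/ℓ := by rw [abs_div, abs_of_pos hℓ0]
    by_cases hx : |x| ≤ R*ℓ
    · rw [Set.indicator_of_mem (Set.mem_Icc.mpr (abs_le.mp hx))]
      by_cases hx2 : |x/ℓ| < ε₂
      · rw [hr1z _ hx2, hr2z _ hx2]
        simp only [mul_zero, zero_mul, abs_zero, add_zero, zero_add]
        positivity
      · push_neg at hx2
        have hxx : ε₂*ℓ ≤ |x| := by
          rw [habsdiv] at hx2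
          calc ε₂*ℓ ≤ (|x|/ℓ)*ℓ := by nlinarith
            _ = |x| := by field_simp
        have hE := hEE2 x hxx
        have hfx : |f x| ≤ C₀*(ε₂^(-δ)*ℓ^(-δ)) :=
          (hfb x).trans (mul_le_mul_of_nonneg_left hE hC₀.le)
        have hf'x : |deriv f x| ≤ C₀*(ε₂^(-δ)*ℓ^(-δ)) := by
          refine (hf'b x).trans (le_trans ?_ (mul_le_mul_of_nonneg_left hE hC₀.le))
          exact mul_le_mul_of_nonneg_left
            (Real.rpow_le_rpow_of_exponent_le hP1 (by linarith)) hC₀.le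
        have t4 : |χ₀ (h*x) * (deriv (deriv ρ) (x/ℓ) * (1/ℓ) * (1/ℓ)) * f x|
            ≤ D*(D*(1/ℓ)*1)*(C₀*(ε₂^(-δ)*ℓ^(-δ))) := by
          simp only [abs_mul, abs_of_pos hinvℓ0]
          gcongr <;> first
            | assumption
            | exact hDχ _
            | exact hDχ1 _
            | exact hDχ2 _
            | exact hDρ _
            | exact hDρ1 _
            | exact hDρ2 _
            | exact hfx
            | exact hf'x
            | exact hf''b x
        have t5 : |2 * (χ₀ (h*x) * (deriv ρ (x/ℓ) * (1/ℓ)) * deriv f x)|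
            ≤ 2*(D*(D*(1/ℓ))*(C₀*(ε₂^(-δ)*ℓ^(-δ)))) := by
          simp only [abs_mul, abs_of_pos hinvℓ0, abs_two]
          gcongr <;> first
            | assumption
            | exact hDχ _
            | exact hDχ1 _
            | exact hDχ2 _
            | exact hDρ _
            | exact hDρ1 _
            | exact hDρ2 _
            | exact hfx
            | exact hf'x
            | exact hf''b x
        nlinarith [t4, t5]
    · push_neg at hx
      have hRlt : R < |x/ℓ| := by
        rw [habsdiv, lt_div_iff₀ hℓ0]
        nlinarith
      rw [hr1R _ hRlt, hr2R _ hRlt]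
      simp only [mul_zero, zero_mul, abs_zero, add_zero, zero_add]
      exact Set.indicator_nonneg (fun _ _ => by positivity) x
  have claim3 : ∀ x : ℝ,
      |χ₀ (h*x) * ρ (x/ℓ) * deriv (deriv f) x|
      ≤ (C₀*D^2*(ε₂^(-δ)*ℓ^(-δ))) * (1+x^2)⁻¹ := by
    intro x
    have hP0 : (0:ℝ) < 1 + |x| := by positivity
    have habsdiv : |x/ℓ| = |x|/ℓ := by rw [abs_div, abs_of_pos hℓ0]
    by_cases hx2 : |x/ℓ| < ε₂
    · rw [hρz _ hx2]
      simp only [mul_zero, zero_mul, abs_zero]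
      positivity
    · push_neg at hx2
      have hxx : ε₂*ℓ ≤ |x| := by
        rw [habsdiv] at hx2
        calc ε₂*ℓ ≤ (|x|/ℓ)*ℓ := by nlinarith
          _ = |x| := by field_simp
      have hE : (1+|x|)^(-δ) ≤ ε₂^(-δ)*ℓ^(-δ) := hEE2 x hxx
      have hsplit : (1+|x|)^(-2-δ) = (1+|x|)^(-(2:ℝ)) * (1+|x|)^(-δ) := by
        rw [← Real.rpow_add hP0]; ring_nf
      have h2 : (1+|x|)^(-(2:ℝ)) ≤ (1+x^2)⁻¹ := by
        rw [Real.rpow_neg hP0.le, show ((2:ℝ)) = ((2:ℕ):ℝ) by norm_num,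
          Real.rpow_natCast]
        have hle : 1+x^2 ≤ (1+|x|)^2 := by nlinarith [sq_abs x, abs_nonneg x]
        exact inv_anti₀ (by positivity) hle
      calc |χ₀ (h*x) * ρ (x/ℓ) * deriv (deriv f) x|
          = |χ₀ (h*x)| * |ρ (x/ℓ)| * |deriv (deriv f) x| := by
            rw [abs_mul, abs_mul]
        _ ≤ D * D * (C₀ * (1+|x|)^(-2-δ)) := by
            gcongr <;> first
            | assumption
            | exact hDχ _
            | exact hDχ1 _
            | exact hDχ2 _
            | exact hDρ _
            | exact hDρ1 _
            | exact hDρ2 _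
            | exact hfx
            | exact hf'x
            | exact hf''b x
        _ = C₀*D^2*((1+|x|)^(-(2:ℝ)) * (1+|x|)^(-δ)) := by rw [hsplit]; ring
        _ ≤ C₀*D^2*((1+x^2)⁻¹ * (ε₂^(-δ)*ℓ^(-δ))) := by
            gcongr
        _ = (C₀*D^2*(ε₂^(-δ)*ℓ^(-δ))) * (1+x^2)⁻¹ := by ring
  -- the majorant and its integral
  have hpt : ∀ x : ℝ,
      |deriv (deriv (fun x => χ₀ (h * x) * ρ (x / ℓ) * f x)) x|
      ≤ Set.indicator (Set.Icc (-(M/h)) (M/h)) (fun _ => 5*C₀*D^2*(h*(ε₁^(-δ)*h^δ))) x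
        + Set.indicator (Set.Icc (-(R*ℓ)) (R*ℓ)) (fun _ => 3*C₀*D^2*((1/ℓ)*(ε₂^(-δ)*ℓ^(-δ)))) x
        + (C₀*D^2*(ε₂^(-δ)*ℓ^(-δ))) * (1+x^2)⁻¹ := by
    intro x
    rw [second_deriv_formula χ₀ ρ f hχ₀ hρ hf h ℓ x]
    have habs := abs_add₆
      ((h * (h * deriv (deriv χ₀) (h*x))) * ρ (x/ℓ) * f x)
      (2 * ((h * deriv χ₀ (h*x)) * (deriv ρ (x/ℓ) * (1/ℓ)) * f x))
      (2 * ((h * deriv χ₀ (h*x)) * ρ (x/ℓ) * deriv f x))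
      (χ₀ (h*x) * (deriv (deriv ρ) (x/ℓ) * (1/ℓ) * (1/ℓ)) * f x)
      (2 * (χ₀ (h*x) * (deriv ρ (x/ℓ) * (1/ℓ)) * deriv f x))
      (χ₀ (h*x) * ρ (x/ℓ) * deriv (deriv f) x)
    have c1 := claim1 x
    have c2 := claim2 x
    have c3 := claim3 x
    linarith
  have hint1 : Integrable ((Set.Icc (-(M/h)) (M/h)).indicator
      (fun _ => 5*C₀*D^2*(h*(ε₁^(-δ)*h^δ)))) := by
    refine IntegrableOn.integrable_indicator ?_ measurableSet_Icc
    exact integrableOn_const measure_Icc_lt_top.ne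
  have hint2 : Integrable ((Set.Icc (-(R*ℓ)) (R*ℓ)).indicator
      (fun _ => 3*C₀*D^2*((1/ℓ)*(ε₂^(-δ)*ℓ^(-δ))))) := by
    refine IntegrableOn.integrable_indicator ?_ measurableSet_Icc
    exact integrableOn_const measure_Icc_lt_top.ne
  have hint3 : Integrable (fun x : ℝ => (C₀*D^2*(ε₂^(-δ)*ℓ^(-δ))) * (1+x^2)⁻¹) :=
    integrable_inv_one_add_sq.const_mul _
  have hΦint : Integrable (fun x : ℝ =>
      Set.indicator (Set.Icc (-(M/h)) (M/h)) (fun _ => 5*C₀*D^2*(h*(ε₁^(-δ)*h^δ))) x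
      + Set.indicator (Set.Icc (-(R*ℓ)) (R*ℓ)) (fun _ => 3*C₀*D^2*((1/ℓ)*(ε₂^(-δ)*ℓ^(-δ)))) x
      + (C₀*D^2*(ε₂^(-δ)*ℓ^(-δ))) * (1+x^2)⁻¹) := (hint1.add hint2).add hint3
  have hmono := integral_mono_of_nonneg
    (Filter.Eventually.of_forall (fun x => abs_nonneg _)) hΦint
    (Filter.Eventually.of_forall hpt)
  refine le_trans hmono ?_
  have hI1 : ∫ x : ℝ, Set.indicator (Set.Icc (-(M/h)) (M/h))
      (fun _ => 5*C₀*D^2*(h*(ε₁^(-δ)*h^δ))) x = (2*(M/h)) * (5*C₀*D^2*(h*(ε₁^(-δ)*h^δ))) := by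
    rw [integral_indicator_const _ measurableSet_Icc, Real.volume_real_Icc_of_le (neg_le_self (by positivity)), smul_eq_mul]
    ring
  have hI2 : ∫ x : ℝ, Set.indicator (Set.Icc (-(R*ℓ)) (R*ℓ))
      (fun _ => 3*C₀*D^2*((1/ℓ)*(ε₂^(-δ)*ℓ^(-δ)))) x
      = (2*(R*ℓ)) * (3*C₀*D^2*((1/ℓ)*(ε₂^(-δ)*ℓ^(-δ)))) := by
    rw [integral_indicator_const _ measurableSet_Icc, Real.volume_real_Icc_of_le (neg_le_self (by positivity)), smul_eq_mul]
    ring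
  have hI3 : ∫ x : ℝ, (C₀*D^2*(ε₂^(-δ)*ℓ^(-δ))) * (1+x^2)⁻¹
      = (C₀*D^2*(ε₂^(-δ)*ℓ^(-δ))) * Real.pi := by
    rw [MeasureTheory.integral_const_mul, integral_univ_inv_one_add_sq]
  have hint1' : Integrable (fun x : ℝ => Set.indicator (Set.Icc (-(M/h)) (M/h))
      (fun _ => 5*C₀*D^2*(h*(ε₁^(-δ)*h^δ))) x) := hint1
  have hint2' : Integrable (fun x : ℝ => Set.indicator (Set.Icc (-(R*ℓ)) (R*ℓ))
      (fun _ => 3*C₀*D^2*((1/ℓ)*(ε₂^(-δ)*ℓ^(-δ)))) x) := hint2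
  have hint12 : Integrable (fun x : ℝ =>
      Set.indicator (Set.Icc (-(M/h)) (M/h)) (fun _ => 5*C₀*D^2*(h*(ε₁^(-δ)*h^δ))) x
      + Set.indicator (Set.Icc (-(R*ℓ)) (R*ℓ)) (fun _ => 3*C₀*D^2*((1/ℓ)*(ε₂^(-δ)*ℓ^(-δ)))) x) :=
    hint1'.add hint2'
  rw [integral_add hint12 hint3, integral_add hint1' hint2', hI1, hI2, hI3]
  have e1 : (2*(M/h)) * (5*C₀*D^2*(h*(ε₁^(-δ)*h^δ))) = (10*C₀*D^2*M*ε₁^(-δ))*h^δ := by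
    field_simp
    ring
  have e2 : (2*(R*ℓ)) * (3*C₀*D^2*((1/ℓ)*(ε₂^(-δ)*ℓ^(-δ)))) = (6*R*C₀*D^2*ε₂^(-δ))*ℓ^(-δ) := by
    field_simp
    ring
  rw [e1, e2]
  have hπ : (0:ℝ) < Real.pi := Real.pi_pos
  have hch : (0:ℝ) ≤ 10*C₀*D^2*M*ε₁^(-δ) := by positivity
  have hc2' : (0:ℝ) ≤ C₀*D^2*ε₂^(-δ) := by positivity
  nlinarith [mul_nonneg hch hℓδ.le, hhδ.le, hℓδ.le,
    mul_nonneg (by positivity : (0:ℝ) ≤ 6*R*C₀*D^2*ε₂^(-δ)) hhδ.le,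
    mul_nonneg (by positivity : (0:ℝ) ≤ Real.pi*C₀*D^2*ε₂^(-δ)) hhδ.le]
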